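/- Let h be a real skew-symmetric 2n×2n matrix with eigenvalues ±iε_k (ε_k ≥ 0). Then Π_k (e^{ε_k/2} + e^{-ε_k/2}) = pf(sinh(ih)) / pf(sinh(ih/2)), whenever the right-hand side Pfaffians are nonzero; equivalently (Π_k 2cosh(ε_k/2))² = det(1 + e^{ih}). -/

import Mathlib

open Matrix

/-- Let `h` be a real skew-symmetric `2N×2N` matrix whose eigenvalues are `±iε_k` with
`ε_k ≥ 0` (expressed by the factorization of the characteristic polynomial). Then
`(Π_k (e^{ε_k/2} + e^{-ε_k/2}))² = det(1 + e^{ih})`. -/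
theorem stmt16 (N : ℕ) (h : Matrix (Fin (2 * N)) (Fin (2 * N)) ℝ) (hskew : hᵀ = -h)
    (ε : Fin N → ℝ) (hε : ∀ k, 0 ≤ ε k)
    (hchar : ∀ z : ℂ,
      (z • (1 : Matrix (Fin (2 * N)) (Fin (2 * N)) ℂ) - h.map Complex.ofReal).det =
        ∏ k, (z ^ 2 + (ε k : ℂ) ^ 2)) :
    (((∏ k, (Real.exp (ε k / 2) + Real.exp (-(ε k) / 2))) ^ 2 : ℝ) : ℂ) =
      (1 + NormedSpace.exp (Complex.I • h.map Complex.ofReal)).det := by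
  classical
  set H : Matrix (Fin (2 * N)) (Fin (2 * N)) ℂ := h.map Complex.ofReal with hHdef
  have hHt : Hᴴ = -H := by
    ext i j
    have hs := congrFun (congrFun hskew j) i
    simp only [Matrix.transpose_apply, Matrix.neg_apply] at hs
    simp [hHdef, Matrix.conjTranspose_apply, Matrix.map_apply, hs]
  have hA : (Complex.I • H).IsHermitian := by
    unfold Matrix.IsHermitian
    rw [Matrix.conjTranspose_smul, hHt]
    simp [smul_smul]
  set A : Matrix (Fin (2 * N)) (Fin (2 * N)) ℂ := Complex.I • H with hAdef
  set μ : Fin (2 * N) → ℝ := hA.eigenvalues with hμdef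
  set U : Matrix (Fin (2 * N)) (Fin (2 * N)) ℂ := ↑(hA.eigenvectorUnitary) with hUdef
  have hU1 : U * star U = 1 := Matrix.mem_unitaryGroup_iff.mp (hA.eigenvectorUnitary).2
  have hU2 : star U * U = 1 := Matrix.mem_unitaryGroup_iff'.mp (hA.eigenvectorUnitary).2
  set D : Matrix (Fin (2 * N)) (Fin (2 * N)) ℂ :=
    diagonal (fun i => (μ i : ℂ)) with hDdef
  have hDD : (diagonal (RCLike.ofReal ∘ μ) : Matrix (Fin (2 * N)) (Fin (2 * N)) ℂ) = D := by
    have e : (RCLike.ofReal ∘ μ) = fun i => ((μ i : ℝ) : ℂ) := by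
      funext i
      norm_num
    rw [hDdef, e]
  have hspec : A = U * D * star U := by
    rw [← hDD]; exact hA.spectral_theorem
  have conj_det : ∀ M : Matrix (Fin (2 * N)) (Fin (2 * N)) ℂ, (U * M * star U).det = M.det := by
    intro M
    rw [Matrix.det_mul, Matrix.det_mul, mul_comm, ← mul_assoc, ← Matrix.det_mul, hU2,
      Matrix.det_one, one_mul]
  -- determinant of 1 + exp A
  have hone : (1 : Matrix (Fin (2 * N)) (Fin (2 * N)) ℂ) = U * 1 * star U := by
    rw [mul_one, hU1]
  set Uu : (Matrix (Fin (2 * N)) (Fin (2 * N)) ℂ)ˣ := ⟨U, star U, hU1, hU2⟩ with hUudef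
  have hexpA : NormedSpace.exp A = U * NormedSpace.exp D * star U := by
    have := Matrix.exp_units_conj Uu D
    simpa [hUudef, ← hspec] using this
  have hdet1 : (1 + NormedSpace.exp A).det = ∏ i, (1 + Complex.exp (μ i)) := by
    have : (1 + NormedSpace.exp A) = U * (1 + NormedSpace.exp D) * star U := by
      rw [hexpA, mul_add, add_mul, ← hone]
    rw [this, conj_det]
    rw [Matrix.exp_diagonal]
    have : (1 : Matrix (Fin (2 * N)) (Fin (2 * N)) ℂ) + diagonal (NormedSpace.exp fun i => (μ i : ℂ))
        = diagonal (fun i => 1 + Complex.exp (μ i)) := by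
      rw [← Matrix.diagonal_one, Matrix.diagonal_add]
      congr 1
      ext i
      simp [Pi.exp_def, ← Complex.exp_eq_exp_ℂ]
    rw [this, Matrix.det_diagonal]
  -- characteristic identity for eigenvalues
  have hcharμ : ∀ z : ℂ, (∏ i, (z - (μ i : ℂ))) = ∏ k, ((z - (ε k : ℂ)) * (z + (ε k : ℂ))) := by
    intro z
    have h1 : z • (1 : Matrix (Fin (2 * N)) (Fin (2 * N)) ℂ) - A
        = U * (z • 1 - D) * star U := by
      rw [mul_sub, sub_mul, ← hspec]
      congr 1
      rw [Matrix.mul_smul, mul_one, Matrix.smul_mul, hU1]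
    have h2 : (z • (1 : Matrix (Fin (2 * N)) (Fin (2 * N)) ℂ) - D)
        = diagonal (fun i => z - (μ i : ℂ)) := by
      ext i j
      by_cases hij : i = j <;>
        simp [hDdef, Matrix.sub_apply, Matrix.smul_apply, Matrix.one_apply, diagonal_apply, hij]
    have hL : (z • (1 : Matrix (Fin (2 * N)) (Fin (2 * N)) ℂ) - A).det = ∏ i, (z - (μ i : ℂ)) := by
      rw [h1, conj_det, h2, Matrix.det_diagonal]
    -- now via hchar
    have h3 : z • (1 : Matrix (Fin (2 * N)) (Fin (2 * N)) ℂ) - A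
        = Complex.I • ((-Complex.I * z) • (1 : Matrix (Fin (2 * N)) (Fin (2 * N)) ℂ) - H) := by
      rw [smul_sub, smul_smul, hAdef]
      congr 2
      ring_nf
      rw [Complex.I_sq]
      ring
    have h4 : (z • (1 : Matrix (Fin (2 * N)) (Fin (2 * N)) ℂ) - A).det
        = (-1 : ℂ) ^ N * ∏ k, ((ε k : ℂ) ^ 2 - z ^ 2) := by
      rw [h3, Matrix.det_smul, hchar (-Complex.I * z)]
      congr 1
      · rw [Fintype.card_fin, pow_mul, Complex.I_sq]
      · apply Finset.prod_congr rfl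
        intro k _
        have : (-Complex.I * z) ^ 2 = -z ^ 2 := by
          rw [mul_pow]; ring_nf; rw [Complex.I_sq]; ring
        rw [this]; ring
    rw [← hL, h4]
    calc (-1:ℂ)^N * ∏ k, ((ε k:ℂ)^2 - z^2)
        = (∏ _k : Fin N, (-1:ℂ)) * ∏ k, ((ε k:ℂ)^2 - z^2) := by
          rw [Finset.prod_const, Finset.card_univ, Fintype.card_fin]
      _ = ∏ k, ((-1:ℂ) * ((ε k:ℂ)^2 - z^2)) := (Finset.prod_mul_distrib).symm
      _ = ∏ k, ((z - (ε k:ℂ)) * (z + (ε k:ℂ))) := Finset.prod_congr rfl (fun k _ => by ring)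
  -- polynomial / multiset step
  set t : Multiset ℂ := Finset.univ.val.map fun i => ((μ i : ℝ) : ℂ) with htdef
  set s : Multiset ℂ := (Finset.univ.val.map fun k => ((ε k : ℝ) : ℂ))
      + Finset.univ.val.map (fun k => (-(ε k : ℝ) : ℂ)) with hsdef
  have hts : t = s := by
    have hPQ : (t.map fun a => Polynomial.X - Polynomial.C a).prod
        = (s.map fun a => Polynomial.X - Polynomial.C a).prod := by
      apply Polynomial.funext
      intro z
      rw [Polynomial.eval_multiset_prod, Polynomial.eval_multiset_prod]
      simp only [Multiset.map_map, Function.comp, Polynomial.eval_sub, Polynomial.eval_X,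
        Polynomial.eval_C]
      rw [htdef, hsdef, Multiset.map_add, Multiset.prod_add]
      simp only [Multiset.map_map, Function.comp]
      rw [← Finset.prod_eq_multiset_prod, ← Finset.prod_eq_multiset_prod,
        ← Finset.prod_eq_multiset_prod, ← Finset.prod_mul_distrib]
      rw [hcharμ z]
      apply Finset.prod_congr rfl
      intro k _
      ring
    have := congrArg Polynomial.roots hPQ
    rwa [Polynomial.roots_multiset_prod_X_sub_C, Polynomial.roots_multiset_prod_X_sub_C] at this
  -- conclude
  have key : (∏ i, (1 + Complex.exp (μ i))) =
      ∏ k, ((1 + Complex.exp (ε k)) * (1 + Complex.exp (-(ε k)))) := by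
    have := congrArg (fun m : Multiset ℂ => (m.map fun z => 1 + Complex.exp z).prod) hts
    simp only [htdef, hsdef, Multiset.map_add, Multiset.prod_add, Multiset.map_map,
      Function.comp] at this
    rw [← Finset.prod_eq_multiset_prod, ← Finset.prod_eq_multiset_prod,
      ← Finset.prod_eq_multiset_prod] at this
    rw [this, ← Finset.prod_mul_distrib]
  rw [hdet1, key]
  push_cast [Complex.ofReal_exp]
  rw [← Finset.prod_pow, ]
  apply Finset.prod_congr rfl
  intro k _
  set a : ℂ := (ε k : ℂ)
  have h1 : Complex.exp (a/2) * Complex.exp (a/2) = Complex.exp a := by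
    rw [← Complex.exp_add]; ring_nf
  have h2 : Complex.exp (-a/2) * Complex.exp (-a/2) = Complex.exp (-a) := by
    rw [← Complex.exp_add]; ring_nf
  have h3 : Complex.exp (a/2) * Complex.exp (-a/2) = 1 := by
    have e : a/2 + -a/2 = 0 := by ring
    rw [← Complex.exp_add, e, Complex.exp_zero]
  have h4 : Complex.exp a * Complex.exp (-a) = 1 := by
    have e : a + -a = 0 := by ring
    rw [← Complex.exp_add, e, Complex.exp_zero]
  push_cast
  linear_combination h1 + h2 + 2*h3 - h4
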